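/- (Model identification for the Lasso.) Let Φ : ℝ^N → ℝ^P be linear with columns φ₁,…,φ_N, and x₀ ∈ ℝ^N with I = supp(x₀). Assume (φ_i)_{i∈I} is linearly independent and ‖Φ_{I^c}^⊤ Φ_I (Φ_I^⊤Φ_I)^{-1} sign(x₀)_I‖_∞ < 1. Then there exist constants C > 0 and C' > 0 such that for every λ and w with 0 < λ ≤ C and ‖w‖ ≤ Cλ, setting y = Φx₀ + w, the problem min_x (1/(2λ))‖Φx − y‖² + ‖x‖₁ has a unique minimizer x⋆, which satisfies supp(x⋆) ⊆ supp(x₀) and ‖x⋆ − x₀‖ ≤ C'·max(λ, ‖w‖). -/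

import Mathlib

set_option maxHeartbeats 1000000


open Matrix

/-- Euclidean dot product on `ℝ^n`. -/
noncomputable def dotp {n : ℕ} (u v : Fin n → ℝ) : ℝ := ∑ i, u i * v i

/-- Euclidean (ℓ²) norm on `ℝ^n`. -/
noncomputable def nrm2 {n : ℕ} (u : Fin n → ℝ) : ℝ := Real.sqrt (∑ i, (u i) ^ 2)

/-- ℓ¹ norm on `ℝ^n`. -/
noncomputable def l1norm {n : ℕ} (u : Fin n → ℝ) : ℝ := ∑ i, |u i|

/-- ℓ^∞ norm of a finitely indexed real vector. -/
noncomputable def linf {ι : Type*} [Fintype ι] (u : ι → ℝ) : ℝ := ⨆ i, |u i|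

/-- The sign function: 1 for positive, -1 for negative, 0 at 0. -/
noncomputable def sgn (t : ℝ) : ℝ := if 0 < t then 1 else if t < 0 then -1 else 0

/-- Subdifferential of a finite-valued function `J : ℝ^n → ℝ` at `x`:
`∂J(x) = {η : J(x+δ) ≥ J(x) + ⟨η,δ⟩ for all δ}`. -/
def subdiff {n : ℕ} (J : (Fin n → ℝ) → ℝ) (x : Fin n → ℝ) : Set (Fin n → ℝ) :=
  {η | ∀ δ, J x + dotp η δ ≤ J (x + δ)}

/-- The model tangent subspace `T_x = Lin(∂J(x))^⊥`, where `Lin(E)` is the linear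
space parallel to the affine hull of `E`. -/
def modelT {n : ℕ} (J : (Fin n → ℝ) → ℝ) (x : Fin n → ℝ) : Set (Fin n → ℝ) :=
  {u | ∀ v ∈ (affineSpan ℝ (subdiff J x)).direction, dotp u v = 0}

/-- Support of `x` as a finite set of indices. -/
noncomputable def suppF {n : ℕ} (x : Fin n → ℝ) : Finset (Fin n) :=
  Finset.univ.filter fun i => x i ≠ 0

/-- The submatrix `Φ_I` of columns of `Φ` indexed by `I`. -/
noncomputable def colsub {N P : ℕ} (Φ : Matrix (Fin P) (Fin N) ℝ) (I : Finset (Fin N)) :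
    Matrix (Fin P) ↥I ℝ := Φ.submatrix id (↑)

/-- The vector `p_F = Φ_I (Φ_I^⊤ Φ_I)⁻¹ s` for a sign vector `s` on `I`. -/
noncomputable def pFvec {N P : ℕ} (Φ : Matrix (Fin P) (Fin N) ℝ) (I : Finset (Fin N))
    (s : ↥I → ℝ) : Fin P → ℝ :=
  (colsub Φ I).mulVec ((((colsub Φ I)ᵀ * (colsub Φ I))⁻¹).mulVec s)

/-- The irrepresentable-condition quantity `‖Φ_{I^c}^⊤ Φ_I (Φ_I^⊤Φ_I)⁻¹ s‖_∞`. -/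
noncomputable def ICval {N P : ℕ} (Φ : Matrix (Fin P) (Fin N) ℝ) (I : Finset (Fin N))
    (s : ↥I → ℝ) : ℝ :=
  linf ((Φ.submatrix id ((↑) : {j // j ∉ I} → Fin N))ᵀ.mulVec (pFvec Φ I s))

noncomputable def n2 {ι : Type*} [Fintype ι] (u : ι → ℝ) : ℝ := Real.sqrt (∑ i, u i ^ 2)

noncomputable def frob {ι κ : Type*} [Fintype ι] [Fintype κ] (A : Matrix ι κ ℝ) : ℝ :=
  Real.sqrt (∑ p, ∑ i, A p i ^ 2)

lemma n2_nonneg {ι : Type*} [Fintype ι] (u : ι → ℝ) : 0 ≤ n2 u := Real.sqrt_nonneg _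

lemma frob_nonneg {ι κ : Type*} [Fintype ι] [Fintype κ] (A : Matrix ι κ ℝ) : 0 ≤ frob A :=
  Real.sqrt_nonneg _

lemma sq_n2 {ι : Type*} [Fintype ι] (u : ι → ℝ) : n2 u ^ 2 = ∑ i, u i ^ 2 :=
  Real.sq_sqrt (Finset.sum_nonneg fun i _ => sq_nonneg _)

lemma n2_le {ι : Type*} [Fintype ι] {u : ι → ℝ} {b : ℝ} (hb : 0 ≤ b)
    (h : ∑ i, u i ^ 2 ≤ b ^ 2) : n2 u ≤ b := by
  have := Real.sqrt_le_sqrt h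
  rwa [Real.sqrt_sq hb] at this

lemma abs_le_n2 {ι : Type*} [Fintype ι] (u : ι → ℝ) (i : ι) : |u i| ≤ n2 u := by
  rw [← Real.sqrt_sq_eq_abs]
  exact Real.sqrt_le_sqrt (Finset.single_le_sum (fun j _ => sq_nonneg (u j)) (Finset.mem_univ i))

lemma abs_sum_mul_le {ι : Type*} [Fintype ι] (u v : ι → ℝ) :
    |∑ i, u i * v i| ≤ n2 u * n2 v := by
  rw [← Real.sqrt_sq_eq_abs, n2, n2, ← Real.sqrt_mul (Finset.sum_nonneg fun i _ => sq_nonneg _)]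
  exact Real.sqrt_le_sqrt (Finset.sum_mul_sq_le_sq_mul_sq _ _ _)

lemma sum_mul_le {ι : Type*} [Fintype ι] (u v : ι → ℝ) :
    ∑ i, u i * v i ≤ n2 u * n2 v :=
  le_trans (le_abs_self _) (abs_sum_mul_le u v)

lemma n2_add_le {ι : Type*} [Fintype ι] (u v : ι → ℝ) : n2 (u + v) ≤ n2 u + n2 v := by
  apply n2_le (add_nonneg (n2_nonneg u) (n2_nonneg v))
  have h1 : ∑ i, (u + v) i ^ 2 = ∑ i, u i ^ 2 + 2 * ∑ i, u i * v i + ∑ i, v i ^ 2 := by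
    rw [Finset.mul_sum, ← Finset.sum_add_distrib, ← Finset.sum_add_distrib]
    exact Finset.sum_congr rfl fun i _ => by simp [Pi.add_apply]; ring
  have h2 := sum_mul_le u v
  have h3 := sq_n2 u; have h4 := sq_n2 v
  nlinarith [n2_nonneg u, n2_nonneg v]

lemma n2_sub_le {ι : Type*} [Fintype ι] (u v : ι → ℝ) : n2 (u - v) ≤ n2 u + n2 v := by
  have : n2 (u - v) ≤ n2 u + n2 (-v) := by
    have := n2_add_le u (-v); simpa [sub_eq_add_neg] using this
  simpa [n2, neg_pow] using this

lemma n2_smul (c : ℝ) {ι : Type*} [Fintype ι] (u : ι → ℝ) :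
    n2 (fun i => c * u i) = |c| * n2 u := by
  simp only [n2, mul_pow, ← Finset.mul_sum]
  rw [Real.sqrt_mul (sq_nonneg c), Real.sqrt_sq_eq_abs]

lemma n2_mulVec_le {ι κ : Type*} [Fintype ι] [Fintype κ] (A : Matrix ι κ ℝ) (v : κ → ℝ) :
    n2 (A.mulVec v) ≤ frob A * n2 v := by
  apply n2_le (mul_nonneg (frob_nonneg A) (n2_nonneg v))
  have h1 : ∀ p, (A.mulVec v p) ^ 2 ≤ (∑ i, A p i ^ 2) * ∑ i, v i ^ 2 := fun p => by
    simpa [Matrix.mulVec, dotProduct] using Finset.sum_mul_sq_le_sq_mul_sq Finset.univ (A p) v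
  calc ∑ p, (A.mulVec v p) ^ 2 ≤ ∑ p, (∑ i, A p i ^ 2) * ∑ i, v i ^ 2 :=
        Finset.sum_le_sum fun p _ => h1 p
    _ = (frob A * n2 v) ^ 2 := by
        rw [← Finset.sum_mul, mul_pow, frob, n2,
          Real.sq_sqrt (Finset.sum_nonneg fun p _ => Finset.sum_nonneg fun i _ => sq_nonneg (A p i)),
          Real.sq_sqrt (Finset.sum_nonneg fun i _ => sq_nonneg _)]

lemma col_n2_le_frob {ι κ : Type*} [Fintype ι] [Fintype κ] (A : Matrix ι κ ℝ) (j : κ) :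
    n2 (fun p => A p j) ≤ frob A := by
  apply n2_le (frob_nonneg A)
  rw [frob, Real.sq_sqrt (Finset.sum_nonneg fun p _ => Finset.sum_nonneg fun i _ => sq_nonneg (A p i))]
  exact Finset.sum_le_sum fun p _ =>
    Finset.single_le_sum (fun i _ => sq_nonneg (A p i)) (Finset.mem_univ j)

/-- model identification for the Lasso. Under injectivity of `Φ_I`
and the irrepresentable condition, for `0 < λ ≤ C` and `‖w‖ ≤ Cλ`, the Lasso has
a unique minimizer `x⋆` with `supp(x⋆) ⊆ supp(x₀)` and
`‖x⋆ − x₀‖ ≤ C'·max(λ,‖w‖)`. -/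
theorem stmt12 {N P : ℕ} (Φ : Matrix (Fin P) (Fin N) ℝ) (x₀ : Fin N → ℝ)
    (hli : LinearIndependent ℝ (fun i : ↥(suppF x₀) => Φᵀ (i : Fin N)))
    (hIC : ICval Φ (suppF x₀) (fun i => sgn (x₀ i)) < 1) :
    ∃ C > (0:ℝ), ∃ C' > (0:ℝ), ∀ (lam : ℝ) (w : Fin P → ℝ),
      0 < lam → lam ≤ C → nrm2 w ≤ C * lam →
      ∃ xs : Fin N → ℝ,
        (∀ x, (1 / (2 * lam)) * nrm2 (Φ.mulVec xs - (Φ.mulVec x₀ + w)) ^ 2 + l1norm xs ≤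
              (1 / (2 * lam)) * nrm2 (Φ.mulVec x - (Φ.mulVec x₀ + w)) ^ 2 + l1norm x) ∧
        (∀ x' : Fin N → ℝ,
          (∀ x, (1 / (2 * lam)) * nrm2 (Φ.mulVec x' - (Φ.mulVec x₀ + w)) ^ 2 + l1norm x' ≤
                (1 / (2 * lam)) * nrm2 (Φ.mulVec x - (Φ.mulVec x₀ + w)) ^ 2 + l1norm x) →
          x' = xs) ∧
        (∀ i, xs i ≠ 0 → x₀ i ≠ 0) ∧
        nrm2 (xs - x₀) ≤ C' * max lam (nrm2 w) := by
  classical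
  set I := suppF x₀ with hI
  set s : ↥I → ℝ := fun i => sgn (x₀ (i : Fin N)) with hs
  set A := colsub Φ I with hA
  set G := Aᵀ * A with hG
  -- injectivity of A
  have hA0 : ∀ z : ↥I → ℝ, A.mulVec z = 0 → z = 0 := by
    intro z hz
    have h := Fintype.linearIndependent_iff.mp hli z ?_
    · funext i; exact h i
    · funext p
      have h1 := congrFun hz p
      simp only [Matrix.mulVec, dotProduct, hA, colsub, Matrix.submatrix_apply,
        id_eq, Pi.zero_apply] at h1
      simpa [Finset.sum_apply, Matrix.transpose_apply, mul_comm] using h1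
  have hGmv0 : ∀ z : ↥I → ℝ, G.mulVec z = 0 → z = 0 := by
    intro z hz
    apply hA0
    have key : ∑ p, (A.mulVec z p) * (A.mulVec z p) = ∑ i, (G.mulVec z) i * z i := by
      rw [show G.mulVec z = Aᵀ.mulVec (A.mulVec z) from by rw [hG, ← Matrix.mulVec_mulVec]]
      simp only [Matrix.mulVec, dotProduct, Matrix.transpose_apply, Finset.sum_mul,
        Finset.mul_sum]
      rw [Finset.sum_comm]
      exact Finset.sum_congr rfl fun p _ => Finset.sum_congr rfl fun i _ =>
        Finset.sum_congr rfl fun j _ => by ring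
    rw [hz] at key
    simp only [Pi.zero_apply, zero_mul, Finset.sum_const_zero] at key
    funext p
    have h2 : ∀ q ∈ Finset.univ, 0 ≤ A.mulVec z q * A.mulVec z q := fun q _ => mul_self_nonneg _
    have h3 := (Finset.sum_eq_zero_iff_of_nonneg h2).mp key p (Finset.mem_univ p)
    have := mul_self_eq_zero.mp h3
    simpa using this
  have hGdet : IsUnit G.det := by
    apply (Matrix.isUnit_iff_isUnit_det G).mp
    apply Matrix.mulVec_injective_iff_isUnit.mp
    intro x y hxy
    have : G.mulVec (x - y) = 0 := by
      rw [Matrix.mulVec_sub, hxy, sub_self]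
    have := hGmv0 _ this
    exact sub_eq_zero.mp this
  have hGinv : ∀ z : ↥I → ℝ, G.mulVec (G⁻¹.mulVec z) = z := by
    intro z
    rw [Matrix.mulVec_mulVec, Matrix.mul_nonsing_inv _ hGdet, Matrix.one_mulVec]
  clear_value A G
  -- constants
  have hFG : (0:ℝ) ≤ frob G⁻¹ := frob_nonneg _
  have hFAT : (0:ℝ) ≤ frob Aᵀ := frob_nonneg _
  have hFA : (0:ℝ) ≤ frob A := frob_nonneg _
  have hFP : (0:ℝ) ≤ frob Φ := frob_nonneg _
  have hns : (0:ℝ) ≤ n2 s := n2_nonneg _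
  obtain ⟨m, hm0, hmle⟩ : ∃ m : ℝ, 0 < m ∧ ∀ i : ↥I, m ≤ |x₀ ↑i| := by
    by_cases h : I.Nonempty
    · refine ⟨I.inf' h (fun i => |x₀ i|), ?_, ?_⟩
      · rw [Finset.lt_inf'_iff]
        intro b hb
        have hb0 : x₀ b ≠ 0 := by simpa [hI, suppF] using hb
        exact abs_pos.mpr hb0
      · intro i; exact Finset.inf'_le _ i.2
    · exact ⟨1, one_pos, fun i => absurd ⟨↑i, i.2⟩ h⟩
  set K2 : ℝ := (frob G⁻¹ + 1) * (frob Aᵀ + n2 s + 1) with hK2def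
  set K3 : ℝ := (frob Φ + 1) * (frob A * frob G⁻¹ * frob Aᵀ + 1) + 1 with hK3def
  clear_value K2 K3
  have hK2 : 0 < K2 := by nlinarith
  have hprod3 : (0:ℝ) ≤ frob A * frob G⁻¹ * frob Aᵀ := mul_nonneg (mul_nonneg hFA hFG) hFAT
  have hK3 : 0 < K3 := by
    nlinarith [mul_nonneg hFP hprod3]
  have hIC0 : 0 < 1 - ICval Φ I s := by linarith
  set C : ℝ := min 1 (min ((1 - ICval Φ I s)/(2*K3)) (m/(2*K2))) with hCdef
  clear_value C
  have hC : 0 < C := by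
    rw [hCdef]
    refine lt_min one_pos (lt_min ?_ ?_) <;> positivity
  have hC1 : C ≤ 1 := hCdef ▸ min_le_left _ _
  have hCK3 : C ≤ (1 - ICval Φ I s)/(2*K3) :=
    hCdef ▸ le_trans (min_le_right _ _) (min_le_left _ _)
  have hCm : C ≤ m/(2*K2) := hCdef ▸ le_trans (min_le_right _ _) (min_le_right _ _)
  refine ⟨C, hC, 2*K2, by nlinarith, ?_⟩
  intro lam w hlam hlamC hwC
  have hlam0 : lam ≠ 0 := ne_of_gt hlam
  set z : ↥I → ℝ := fun i => Aᵀ.mulVec w i - lam * s i with hz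
  set u : ↥I → ℝ := G⁻¹.mulVec z with hu
  set ext : (↥I → ℝ) → (Fin N → ℝ) := fun v i => if h : i ∈ I then v ⟨i, h⟩ else 0 with hext
  set xs : Fin N → ℝ := fun i => x₀ i + ext u i with hxs
  have hsum : ∀ (f : Fin N → ℝ) (v : ↥I → ℝ), ∑ i, f i * ext v i = ∑ i : ↥I, f ↑i * v i := by
    intro f v
    calc ∑ i : Fin N, f i * ext v i = ∑ i ∈ I, f i * ext v i :=
          (Finset.sum_subset (Finset.subset_univ I) (by
            intro x _ hx; simp [hext, hx])).symm
      _ = ∑ i : ↥I, f ↑i * ext v ↑i := (Finset.sum_coe_sort _ _).symm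
      _ = ∑ i : ↥I, f ↑i * v i := Finset.sum_congr rfl (fun i _ => by
            simp [hext, i.2])
  have hx0off : ∀ i, i ∉ I → x₀ i = 0 := by
    intro i hi; by_contra hne
    exact hi (by simp [hI, suppF, hne])
  have hextoff : ∀ (v : ↥I → ℝ) i, i ∉ I → ext v i = 0 := by
    intro v i hi; simp [hext, hi]
  have hxsoff : ∀ i, i ∉ I → xs i = 0 := by
    intro i hi; simp [hxs, hextoff u i hi, hx0off i hi]
  have hΦext : ∀ v : ↥I → ℝ, Φ.mulVec (ext v) = A.mulVec v := by
    intro v; funext p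
    have h1 := hsum (fun i => Φ p i) v
    simpa [Matrix.mulVec, dotProduct, hA, colsub] using h1
  set r : Fin P → ℝ := A.mulVec u - w with hr
  have hΦxs : Φ.mulVec xs = Φ.mulVec x₀ + A.mulVec u := by
    have h1 : xs = x₀ + ext u := by funext i; simp [hxs]
    rw [h1, Matrix.mulVec_add, hΦext]
  have hres : Φ.mulVec xs - (Φ.mulVec x₀ + w) = r := by
    rw [hΦxs, hr]; funext p
    simp only [Pi.sub_apply, Pi.add_apply]; ring
  have hAtr : Aᵀ.mulVec r = fun i => -(lam * s i) := by
    have h1 : Aᵀ.mulVec r = G.mulVec u - Aᵀ.mulVec w := by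
      rw [hr, Matrix.mulVec_sub, hG, ← Matrix.mulVec_mulVec]
    have h2 : G.mulVec u = z := hGinv z
    rw [h1, h2]; funext i
    simp only [hz, Pi.sub_apply]; ring
  set η : Fin N → ℝ := fun j => -(1/lam) * Φᵀ.mulVec r j with hη
  clear_value z u ext xs r η
  have hcol : ∀ i : ↥I, Φᵀ.mulVec r ↑i = Aᵀ.mulVec r i := by
    intro i
    simp [Matrix.mulVec, dotProduct, hA, colsub]
  have hηI : ∀ i : ↥I, η ↑i = s i := by
    intro i
    rw [hη]; dsimp only
    rw [hcol i, hAtr]; field_simp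
  have hwn : n2 w ≤ C * lam := hwC
  have hwnn : (0:ℝ) ≤ n2 w := n2_nonneg w
  have hu2 : n2 u ≤ K2 * (n2 w + lam) := by
    have h1 : n2 u ≤ frob G⁻¹ * n2 z := by rw [hu]; exact n2_mulVec_le _ _
    have h3 : z = (Aᵀ.mulVec w) - (fun i => lam * s i) := by
      funext i; simp [hz]
    have h2 : n2 z ≤ frob Aᵀ * n2 w + lam * n2 s := by
      have h4 : n2 z ≤ n2 (Aᵀ.mulVec w) + n2 (fun i => lam * s i) := by
        rw [h3]; exact n2_sub_le _ _
      have h5 := n2_mulVec_le Aᵀ w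
      have h6 : n2 (fun i => lam * s i) = |lam| * n2 s := n2_smul lam s
      rw [h6, abs_of_pos hlam] at h4; linarith
    have h7 : n2 u ≤ frob G⁻¹ * (frob Aᵀ * n2 w + lam * n2 s) :=
      le_trans h1 (mul_le_mul_of_nonneg_left h2 hFG)
    have h8 : frob G⁻¹ * (frob Aᵀ * n2 w + lam * n2 s) ≤ K2 * (n2 w + lam) := by
      rw [hK2def]
      nlinarith [mul_nonneg (mul_nonneg hFG hFAT) hlam.le, mul_nonneg (mul_nonneg hFG hns) hwnn,
        mul_nonneg hFG hwnn, mul_nonneg hFG hlam.le, mul_nonneg hFAT hwnn,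
        mul_nonneg hFAT hlam.le, mul_nonneg hns hwnn, mul_nonneg hns hlam.le]
    linarith
  have hum : n2 u ≤ m := by
    have hCm2 : C * (2 * K2) ≤ m := (le_div_iff₀ (by positivity)).mp hCm
    have e1 : K2 * n2 w ≤ K2 * (C * lam) := mul_le_mul_of_nonneg_left hwn hK2.le
    have e2 : K2 * lam ≤ K2 * C := mul_le_mul_of_nonneg_left hlamC hK2.le
    have e3 : (K2 * C) * lam ≤ (K2 * C) * C :=
      mul_le_mul_of_nonneg_left hlamC (mul_nonneg hK2.le hC.le)
    have e4 : (K2 * C) * C ≤ (K2 * C) * 1 :=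
      mul_le_mul_of_nonneg_left hC1 (mul_nonneg hK2.le hC.le)
    nlinarith [hu2]
  have humi : ∀ i : ↥I, |u i| ≤ |x₀ ↑i| :=
    fun i => le_trans (le_trans (abs_le_n2 u i) hum) (hmle i)
  have hE : ∀ i, η i * xs i = |xs i| := by
    intro i
    by_cases h : i ∈ I
    · have h1 : η i = s ⟨i, h⟩ := hηI ⟨i, h⟩
      have h2 : |u ⟨i, h⟩| ≤ |x₀ i| := humi ⟨i, h⟩
      have h3 : xs i = x₀ i + u ⟨i, h⟩ := by rw [hxs]; simp [hext, h]
      have hx0 : x₀ i ≠ 0 := by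
        intro h0; exact absurd h (by simp [hI, suppF, h0])
      rcases hx0.lt_or_gt with hneg | hpos
      · have hsgn : s ⟨i, h⟩ = -1 := by
          rw [hs]; simp only [sgn]
          rw [if_neg (by push_neg; exact hneg.le), if_pos hneg]
        have habs := abs_le.mp h2
        have h4 : |x₀ i| = -(x₀ i) := abs_of_neg hneg
        have h5 : xs i ≤ 0 := by rw [h3]; rw [h4] at habs; linarith [habs.2]
        rw [h1, hsgn, abs_of_nonpos h5]; ring
      · have hsgn : s ⟨i, h⟩ = 1 := by
          rw [hs]; simp only [sgn]; rw [if_pos hpos]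
        have habs := abs_le.mp h2
        have h4 : |x₀ i| = x₀ i := abs_of_pos hpos
        have h5 : 0 ≤ xs i := by rw [h3]; rw [h4] at habs; linarith [habs.1]
        rw [h1, hsgn, abs_of_nonneg h5]; ring
    · rw [hxsoff i h]; simp
  have hηoff : ∀ j, j ∉ I → |η j| < 1 := by
    intro j hj
    set q : Fin P → ℝ := A.mulVec (G⁻¹.mulVec (Aᵀ.mulVec w)) - w with hq
    clear_value q
    have hpf : pFvec Φ I s = A.mulVec (G⁻¹.mulVec s) := by
      unfold pFvec; rw [← hA, ← hG]
    have hu2' : u = G⁻¹.mulVec (Aᵀ.mulVec w) - lam • G⁻¹.mulVec s := by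
      rw [hu]
      have hz2 : z = Aᵀ.mulVec w - lam • s := by
        funext i; simp [hz, Pi.smul_apply, smul_eq_mul]
      rw [hz2, Matrix.mulVec_sub, Matrix.mulVec_smul]
    have hrdec : r = fun p => q p - lam * pFvec Φ I s p := by
      funext p
      rw [hr, hu2', Matrix.mulVec_sub, Matrix.mulVec_smul, hpf, hq]
      simp only [Pi.sub_apply, Pi.smul_apply, smul_eq_mul]
      ring
    have hXY : Φᵀ.mulVec r j = (∑ p, Φ p j * q p) - lam * ∑ p, Φ p j * pFvec Φ I s p := by
      have hh : Φᵀ.mulVec r j = ∑ p, Φ p j * r p := by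
        simp [Matrix.mulVec, dotProduct, Matrix.transpose_apply]
      rw [hh, hrdec]
      rw [Finset.mul_sum, ← Finset.sum_sub_distrib]
      exact Finset.sum_congr rfl fun p _ => by ring
    have hY : |∑ p, Φ p j * pFvec Φ I s p| ≤ ICval Φ I s := by
      have h2 := le_ciSup (f := fun j' : {j // j ∉ I} =>
        |((Φ.submatrix id ((↑) : {j // j ∉ I} → Fin N))ᵀ.mulVec (pFvec Φ I s)) j'|)
        (Set.Finite.bddAbove (Set.finite_range _)) ⟨j, hj⟩
      have h1 : ((Φ.submatrix id ((↑) : {j // j ∉ I} → Fin N))ᵀ.mulVec (pFvec Φ I s)) ⟨j, hj⟩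
          = ∑ p, Φ p j * pFvec Φ I s p := by
        simp [Matrix.mulVec, dotProduct, Matrix.transpose_apply, Matrix.submatrix_apply]
      unfold ICval linf
      rw [← h1]
      exact h2
    have hq2 : n2 q ≤ (frob A * frob G⁻¹ * frob Aᵀ + 1) * n2 w := by
      have h1 : n2 q ≤ n2 (A.mulVec (G⁻¹.mulVec (Aᵀ.mulVec w))) + n2 w := by
        rw [hq]; exact n2_sub_le _ _
      have h2 : n2 (Aᵀ.mulVec w) ≤ frob Aᵀ * n2 w := n2_mulVec_le _ _
      have h3 : n2 (G⁻¹.mulVec (Aᵀ.mulVec w)) ≤ frob G⁻¹ * (frob Aᵀ * n2 w) :=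
        le_trans (n2_mulVec_le _ _) (mul_le_mul_of_nonneg_left h2 hFG)
      have h4 : n2 (A.mulVec (G⁻¹.mulVec (Aᵀ.mulVec w)))
          ≤ frob A * (frob G⁻¹ * (frob Aᵀ * n2 w)) :=
        le_trans (n2_mulVec_le _ _) (mul_le_mul_of_nonneg_left h3 hFA)
      nlinarith [h1, h4]
    have h9 : frob Φ * (frob A * frob G⁻¹ * frob Aᵀ + 1) ≤ K3 := by
      rw [hK3def]; nlinarith [hprod3]
    have hX : |∑ p, Φ p j * q p| ≤ K3 * n2 w := by
      have h5 : |∑ p, Φ p j * q p| ≤ n2 (fun p => Φ p j) * n2 q := abs_sum_mul_le _ _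
      have h6 : n2 (fun p => Φ p j) * n2 q ≤ frob Φ * n2 q :=
        mul_le_mul_of_nonneg_right (col_n2_le_frob Φ j) (n2_nonneg q)
      have h7 : frob Φ * n2 q ≤ frob Φ * ((frob A * frob G⁻¹ * frob Aᵀ + 1) * n2 w) :=
        mul_le_mul_of_nonneg_left hq2 hFP
      have h8 : frob Φ * ((frob A * frob G⁻¹ * frob Aᵀ + 1) * n2 w) ≤ K3 * n2 w := by
        rw [← mul_assoc]; exact mul_le_mul_of_nonneg_right h9 hwnn
      linarith
    have hηj : η j = -((∑ p, Φ p j * q p) / lam) + ∑ p, Φ p j * pFvec Φ I s p := by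
      rw [hη]; dsimp only; rw [hXY]; field_simp; ring
    have habs2 : |η j| ≤ |∑ p, Φ p j * q p| / lam + |∑ p, Φ p j * pFvec Φ I s p| := by
      rw [hηj]
      calc |-((∑ p, Φ p j * q p) / lam) + ∑ p, Φ p j * pFvec Φ I s p|
          ≤ |-((∑ p, Φ p j * q p) / lam)| + |∑ p, Φ p j * pFvec Φ I s p| := abs_add_le _ _
        _ = |∑ p, Φ p j * q p| / lam + |∑ p, Φ p j * pFvec Φ I s p| := by
            rw [abs_neg, abs_div, abs_of_pos hlam]
    have hCK3' : C * (2 * K3) ≤ 1 - ICval Φ I s := (le_div_iff₀ (by positivity)).mp hCK3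
    have hXlam : |∑ p, Φ p j * q p| / lam ≤ K3 * C := by
      rw [div_le_iff₀ hlam]
      calc |∑ p, Φ p j * q p| ≤ K3 * n2 w := hX
        _ ≤ K3 * (C * lam) := mul_le_mul_of_nonneg_left hwn hK3.le
        _ = K3 * C * lam := by ring
    linarith [hY, habs2, hXlam, hIC0, hIC]
  have hη1 : ∀ i0 : Fin N, |η i0| ≤ 1 := by
    intro i0; by_cases h : i0 ∈ I
    · rw [show i0 = ((⟨i0, h⟩ : ↥I) : Fin N) from rfl, hηI ⟨i0, h⟩, hs]
      dsimp only; unfold sgn; split_ifs <;> norm_num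
    · exact (hηoff i0 h).le
  have key : ∀ x : Fin N → ℝ,
      (1 / (2 * lam)) * nrm2 (Φ.mulVec x - (Φ.mulVec x₀ + w)) ^ 2 + l1norm x
      = ((1 / (2 * lam)) * nrm2 (Φ.mulVec xs - (Φ.mulVec x₀ + w)) ^ 2 + l1norm xs)
        + (∑ i, (|x i| - η i * x i))
        + (1 / (2 * lam)) * ∑ p, (Φ.mulVec (x - xs) p) ^ 2 := by
    intro x
    have hdiff : Φ.mulVec x - (Φ.mulVec x₀ + w) = fun p => r p + Φ.mulVec (x - xs) p := by
      funext p
      have h1 := congrFun hres p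
      have h2 : Φ.mulVec (x - xs) = Φ.mulVec x - Φ.mulVec xs := Matrix.mulVec_sub Φ x xs
      rw [h2]
      simp only [Pi.sub_apply, Pi.add_apply] at h1 ⊢
      linarith
    have hsq : ∀ v : Fin P → ℝ, nrm2 v ^ 2 = ∑ p, v p ^ 2 := fun v =>
      Real.sq_sqrt (Finset.sum_nonneg fun p _ => sq_nonneg _)
    rw [hdiff, hres, hsq, hsq]
    have hexpand : ∑ p, (r p + Φ.mulVec (x - xs) p) ^ 2
        = ∑ p, r p ^ 2 + 2 * ∑ p, r p * Φ.mulVec (x - xs) p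
          + ∑ p, Φ.mulVec (x - xs) p ^ 2 := by
      rw [Finset.mul_sum, ← Finset.sum_add_distrib, ← Finset.sum_add_distrib]
      exact Finset.sum_congr rfl fun p _ => by ring
    have hcross : ∑ p, r p * Φ.mulVec (x - xs) p = ∑ i, -(lam * η i) * (x i - xs i) := by
      have h1 : ∑ p, r p * Φ.mulVec (x - xs) p = ∑ i, Φᵀ.mulVec r i * (x - xs) i := by
        simp only [Matrix.mulVec, dotProduct, Matrix.transpose_apply, Finset.mul_sum,
          Finset.sum_mul]
        rw [Finset.sum_comm]
        exact Finset.sum_congr rfl fun i _ => Finset.sum_congr rfl fun p _ => by ring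
      rw [h1]
      refine Finset.sum_congr rfl fun i _ => ?_
      have h2 : Φᵀ.mulVec r i = -(lam * η i) := by
        rw [hη]; dsimp only; field_simp
      rw [h2]
      simp only [Pi.sub_apply]
    have hsplit : ∑ i, -(lam * η i) * (x i - xs i)
        = -lam * (∑ i, η i * x i) + lam * (∑ i, η i * xs i) := by
      rw [Finset.mul_sum, Finset.mul_sum, ← Finset.sum_add_distrib]
      exact Finset.sum_congr rfl fun i _ => by ring
    have hsxs : ∑ i, η i * xs i = ∑ i, |xs i| := Finset.sum_congr rfl fun i _ => hE i
    have habs_split : ∑ i, (|x i| - η i * x i) = ∑ i, |x i| - ∑ i, η i * x i :=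
      Finset.sum_sub_distrib _ _
    rw [hexpand, hcross, hsplit, hsxs, habs_split]
    show _ + ∑ i, |x i| = _ + ∑ i, |xs i| + _ + _
    field_simp
    ring
  have hT1 : ∀ x : Fin N → ℝ, (0:ℝ) ≤ ∑ i, (|x i| - η i * x i) := by
    intro x
    apply Finset.sum_nonneg
    intro i _
    have h1 : η i * x i ≤ |η i * x i| := le_abs_self _
    have h2 : |η i * x i| = |η i| * |x i| := abs_mul _ _
    have h3 : |η i| * |x i| ≤ 1 * |x i| :=
      mul_le_mul_of_nonneg_right (hη1 i) (abs_nonneg _)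
    nlinarith
  have hT2 : ∀ x : Fin N → ℝ, (0:ℝ) ≤ (1 / (2 * lam)) * ∑ p, (Φ.mulVec (x - xs) p) ^ 2 := by
    intro x
    apply mul_nonneg (by positivity)
    exact Finset.sum_nonneg fun p _ => sq_nonneg _
  refine ⟨xs, ?_, ?_, ?_, ?_⟩
  · intro x
    have := key x
    have h1 := hT1 x
    have h2 := hT2 x
    linarith
  · intro x' hx'
    have h1 := hx' xs
    have h2 := key x'
    have h3 := hT1 x'
    have h4 := hT2 x'
    have hzero : (∑ i, (|x' i| - η i * x' i)) = 0 ∧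
        (1 / (2 * lam)) * ∑ p, (Φ.mulVec (x' - xs) p) ^ 2 = 0 := by
      constructor <;> linarith
    have hPhid : Φ.mulVec (x' - xs) = 0 := by
      have h5 : ∑ p, (Φ.mulVec (x' - xs) p) ^ 2 = 0 := by
        have := hzero.2
        have h6 : (0:ℝ) < 1 / (2 * lam) := by positivity
        have := mul_eq_zero.mp this
        rcases this with h | h
        · exact absurd h (ne_of_gt h6)
        · exact h
      funext p
      have h7 := (Finset.sum_eq_zero_iff_of_nonneg (fun q _ => sq_nonneg _)).mp h5 p
        (Finset.mem_univ p)
      simpa using pow_eq_zero_iff (n := 2) (by norm_num) |>.mp h7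
    have hoffzero : ∀ j, j ∉ I → x' j = 0 := by
      intro j hj
      have h8 := (Finset.sum_eq_zero_iff_of_nonneg (fun i _ => by
        have h1 : η i * x' i ≤ |η i * x' i| := le_abs_self _
        have h2 : |η i * x' i| = |η i| * |x' i| := abs_mul _ _
        have h3 : |η i| * |x' i| ≤ 1 * |x' i| :=
          mul_le_mul_of_nonneg_right (hη1 i) (abs_nonneg _)
        nlinarith)).mp hzero.1 j (Finset.mem_univ j)
      by_contra hne
      have h9 : |η j * x' j| < |x' j| := by
        have := hηoff j hj
        have h10 : |η j * x' j| = |η j| * |x' j| := abs_mul _ _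
        have h11 : |η j| * |x' j| < 1 * |x' j| :=
          mul_lt_mul_of_pos_right this (abs_pos.mpr hne)
        rw [h10]; linarith
      have h12 : η j * x' j ≤ |η j * x' j| := le_abs_self _
      have h13 : |x' j| = η j * x' j := by linarith [h8]
      linarith
    have hdelta : x' - xs = ext (fun i => x' ↑i - xs ↑i) := by
      funext i
      by_cases h : i ∈ I
      · simp [hext, h]
      · simp [hext, h, hoffzero i h, hxsoff i h]
    have hAdelta : A.mulVec (fun i => x' ↑i - xs ↑i) = 0 := by
      rw [← hΦext, ← hdelta, hPhid]
    have hd0 := hA0 _ hAdelta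
    funext i
    by_cases h : i ∈ I
    · have := congrFun hd0 ⟨i, h⟩
      simpa [sub_eq_zero] using this
    · rw [hoffzero i h, hxsoff i h]
  · intro i hi
    by_contra h0
    have hiI : i ∉ I := by simp [hI, suppF, h0]
    exact hi (hxsoff i hiI)
  · have hxsx0 : xs - x₀ = ext u := by funext i; simp [hxs]
    have hn2ext : nrm2 (ext u) = n2 u := by
      have h1 : ∑ i : Fin N, (ext u i) ^ 2 = ∑ i : ↥I, (u i) ^ 2 := by
        calc ∑ i : Fin N, (ext u i) ^ 2 = ∑ i : Fin N, ext u i * ext u i := by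
              exact Finset.sum_congr rfl fun i _ => sq (ext u i)
          _ = ∑ i : ↥I, ext u ↑i * u i := hsum (ext u) u
          _ = ∑ i : ↥I, (u i) ^ 2 := Finset.sum_congr rfl fun i _ => by
              simp [hext, i.2, sq]
      show Real.sqrt _ = Real.sqrt _
      rw [h1]
    rw [hxsx0, hn2ext]
    have hmax1 : lam ≤ max lam (nrm2 w) := le_max_left _ _
    have hmax2 : nrm2 w ≤ max lam (nrm2 w) := le_max_right _ _
    have hnrm : nrm2 w = n2 w := rfl
    rw [hnrm] at hmax2
    calc n2 u ≤ K2 * (n2 w + lam) := hu2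
      _ ≤ 2 * K2 * max lam (nrm2 w) := by
          have e1 : K2 * lam ≤ K2 * max lam (nrm2 w) :=
            mul_le_mul_of_nonneg_left hmax1 hK2.le
          have e2 : K2 * n2 w ≤ K2 * max lam (nrm2 w) :=
            mul_le_mul_of_nonneg_left hmax2 hK2.le
          linarith
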